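/- The core matrix M̃ of a Moran process is diagonalizable over ℝ with a simple largest eigenvalue: there exist real numbers μ1 > μ2 ≥ … ≥ μ_{N−1} and two bases (ṽ^{(i)})_{i=1,…,N−1} and (ũ^{(i)})_{i=1,…,N−1} of ℝ^{N−1} such that M̃ ṽ^{(i)} = μ_i ṽ^{(i)} and (ũ^{(i)})ᵀ M̃ = μ_i (ũ^{(i)})ᵀ for every i. -/

import Mathlib

open Finset Matrix Filter

/-- An eigenvector of a "Jacobi-structured" matrix (zero above the superdiagonal,
nonzero superdiagonal) that vanishes at index 0 is zero. -/
lemma jacobi_eigvec_zero {n : ℕ} (S : Matrix (Fin n) (Fin n) ℝ)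
    (hupper : ∀ i j : Fin n, (i : ℕ) + 1 < (j : ℕ) → S i j = 0)
    (hsup : ∀ i j : Fin n, (i : ℕ) + 1 = (j : ℕ) → S i j ≠ 0)
    (lam : ℝ) (w : Fin n → ℝ) (hw : S.mulVec w = lam • w)
    (h0 : ∀ h : 0 < n, w ⟨0, h⟩ = 0) : w = 0 := by
  have key : ∀ m : ℕ, ∀ h : m < n, w ⟨m, h⟩ = 0 := by
    intro m
    induction m using Nat.strong_induction_on with
    | _ m ih =>
      intro h
      match m, ih with
      | 0, _ => exact h0 h
      | (m + 1), ih =>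
        have hm : m < n := by omega
        have hrow := congrFun hw ⟨m, hm⟩
        simp only [Matrix.mulVec, dotProduct, Pi.smul_apply, smul_eq_mul] at hrow
        have hsum : ∑ j : Fin n, S ⟨m, hm⟩ j * w j = S ⟨m, hm⟩ ⟨m + 1, h⟩ * w ⟨m + 1, h⟩ := by
          apply Finset.sum_eq_single
          · intro j _ hj
            rcases lt_trichotomy ((j : ℕ)) (m + 1) with hc | hc | hc
            · have : w j = 0 := by
                have := ih (j : ℕ) (by omega) j.isLt
                simpa [Fin.eta] using this
              simp [this]
            · exact absurd (Fin.ext hc : j = ⟨m + 1, h⟩) hj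
            · rw [hupper _ _ (by simpa using hc)]; ring
          · intro hmem; exact absurd (Finset.mem_univ _) hmem
        rw [hsum] at hrow
        have hwm : w ⟨m, hm⟩ = 0 := ih m (by omega) hm
        rw [hwm, mul_zero] at hrow
        have := hsup ⟨m, hm⟩ ⟨m + 1, h⟩ rfl
        exact (mul_eq_zero.mp hrow).resolve_left this
  funext k
  have := key k k.isLt
  simpa [Fin.eta] using this

/-- A hermitian Jacobi-structured matrix has pairwise distinct eigenvalues. -/
lemma jacobi_eigenvalues_injective {n : ℕ} {S : Matrix (Fin n) (Fin n) ℝ} (hS : S.IsHermitian)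
    (hupper : ∀ i j : Fin n, (i : ℕ) + 1 < (j : ℕ) → S i j = 0)
    (hsup : ∀ i j : Fin n, (i : ℕ) + 1 = (j : ℕ) → S i j ≠ 0) :
    Function.Injective hS.eigenvalues := by
  intro i j hij
  by_contra hne
  have hpos : 0 < n := i.pos
  set b := hS.eigenvectorBasis with hb
  set Bi : Fin n → ℝ := ⇑(b i) with hBi
  set Bj : Fin n → ℝ := ⇑(b j) with hBj
  have hbi : S.mulVec Bi = hS.eigenvalues j • Bi := by
    rw [hBi, hb, ← hij]; exact hS.mulVec_eigenvectorBasis i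
  have hbj : S.mulVec Bj = hS.eigenvalues j • Bj := hS.mulVec_eigenvectorBasis j
  set lam := hS.eigenvalues j with hlam
  have horth : (inner ℝ (b i) (b j) : ℝ) = 0 := b.orthonormal.2 hne
  have hnormi : ‖b i‖ = 1 := b.orthonormal.1 i
  have hnormj : ‖b j‖ = 1 := b.orthonormal.1 j
  set z : Fin n := ⟨0, hpos⟩ with hz
  by_cases h0 : Bi z = 0
  · have hz0 : Bi = 0 := jacobi_eigvec_zero S hupper hsup lam Bi hbi (fun _ => h0)
    have : b i = 0 := (WithLp.ofLp_eq_zero 2).mp hz0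
    rw [this] at hnormi; simp at hnormi
  · set c : ℝ := Bj z / Bi z with hc
    set w : Fin n → ℝ := fun k => Bj k - c * Bi k with hwdef
    have hwz : w z = 0 := by
      simp only [hwdef, hc]
      field_simp
      ring
    have hweig : S.mulVec w = lam • w := by
      funext k
      have h1 := congrFun hbj k
      have h2 := congrFun hbi k
      simp only [Matrix.mulVec, dotProduct, Pi.smul_apply, smul_eq_mul] at h1 h2 ⊢
      simp only [hwdef, mul_sub]
      rw [Finset.sum_sub_distrib]
      have : ∑ x : Fin n, S k x * (c * Bi x) = c * ∑ x : Fin n, S k x * Bi x := by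
        rw [Finset.mul_sum]; congr 1; funext x; ring
      rw [this, h1, h2]; ring
    have hw0 : w = 0 := jacobi_eigvec_zero S hupper hsup lam w hweig (fun _ => hwz)
    have hbj_eq : ∀ k, Bj k = c * Bi k := by
      intro k
      have := congrFun hw0 k
      simp only [hwdef, Pi.zero_apply] at this
      linarith
    have hsmul : b j = c • b i := by
      have : Bj = fun k => c * Bi k := funext hbj_eq
      exact WithLp.ofLp_injective 2 (by rw [WithLp.ofLp_smul]; exact this)
    have : (inner ℝ (b i) (b j) : ℝ) = c * (inner ℝ (b i) (b i) : ℝ) := by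
      rw [hsmul, real_inner_smul_right]
    rw [horth, real_inner_self_eq_norm_sq, hnormi] at this
    have hc0 : c = 0 := by simpa using this.symm
    have : b j = 0 := by
      have : Bj = 0 := by funext k; simpa [hc0] using hbj_eq k
      exact (WithLp.ofLp_eq_zero 2).mp this
    rw [this] at hnormj; simp at hnormj

/-- The (N+1)×(N+1) Moran transition matrix (indices 0,…,N) built from a
type selection vector `s`. -/
noncomputable def moranM (N : ℕ) (s : ℕ → ℝ) : Matrix (Fin (N + 1)) (Fin (N + 1)) ℝ :=
  fun i j =>
    if (i : ℕ) + 1 = (j : ℕ) then ((j : ℕ) : ℝ) / N * (1 - s (j : ℕ))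
    else if (i : ℕ) = (j : ℕ) + 1 then ((N : ℝ) - ((j : ℕ) : ℝ)) / N * s (j : ℕ)
    else if (i : ℕ) = (j : ℕ) then
      1 - ((j : ℕ) : ℝ) / N * (1 - s (j : ℕ)) - ((N : ℝ) - ((j : ℕ) : ℝ)) / N * s (j : ℕ)
    else 0

/-- `s` is a type selection vector: `s 0 = 0`, `s N = 1`, `0 < s i < 1` in the interior. -/
def IsTypeSelection (N : ℕ) (s : ℕ → ℝ) : Prop :=
  s 0 = 0 ∧ s N = 1 ∧ ∀ i : ℕ, 0 < i → i < N → 0 < s i ∧ s i < 1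

/-- The core matrix: the (N−1)×(N−1) submatrix of the Moran matrix on states 1,…,N−1. -/
noncomputable def moranCore (N : ℕ) (s : ℕ → ℝ) : Matrix (Fin (N - 1)) (Fin (N - 1)) ℝ :=
  fun i j =>
    moranM N s ⟨(i : ℕ) + 1, by have := i.isLt; omega⟩ ⟨(j : ℕ) + 1, by have := j.isLt; omega⟩

/-- Embedding of core indices {1,…,N−1} into the full index set {0,…,N}. -/
def embIn (N : ℕ) (i : Fin (N - 1)) : Fin (N + 1) :=
  ⟨(i : ℕ) + 1, by have := i.isLt; omega⟩

/-- the Moran core matrix is diagonalizable over ℝ with a simple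
largest eigenvalue: there are eigenvalues μ₁ > μ₂ ≥ … ≥ μ_{N−1} and bases of
right and left eigenvectors. -/
theorem moran_core_diagonalizable
    (N : ℕ) (hN : 2 ≤ N) (s : ℕ → ℝ) (hs : IsTypeSelection N s) :
    ∃ (μ : Fin (N - 1) → ℝ) (v u : Fin (N - 1) → (Fin (N - 1) → ℝ)),
      (∀ i j : Fin (N - 1), i ≤ j → μ j ≤ μ i) ∧
      (∀ j : Fin (N - 1), (j : ℕ) ≠ 0 → μ j < μ ⟨0, by omega⟩) ∧
      LinearIndependent ℝ v ∧ Submodule.span ℝ (Set.range v) = ⊤ ∧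
      LinearIndependent ℝ u ∧ Submodule.span ℝ (Set.range u) = ⊤ ∧
      (∀ i, (moranCore N s).mulVec (v i) = μ i • v i) ∧
      (∀ i, (moranCore N s).vecMul (u i) = μ i • u i) := by
  have hNR : (0:ℝ) < (N:ℝ) := by
    have h0 : 0 < N := by omega
    exact_mod_cast h0
  set A := moranCore N s with hA
  -- structure of A
  have htri : ∀ i j : Fin (N - 1), ((i:ℕ)+1 < (j:ℕ) ∨ (j:ℕ)+1 < (i:ℕ)) → A i j = 0 := by
    intro i j h
    simp only [hA, moranCore, moranM, Fin.val_mk]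
    rw [if_neg (by omega), if_neg (by omega), if_neg (by omega)]
  have hsupA : ∀ i j : Fin (N - 1), (i:ℕ)+1 = (j:ℕ) → 0 < A i j := by
    intro i j h
    simp only [hA, moranCore, moranM, Fin.val_mk]
    rw [if_pos (by omega)]
    have hjN : (j:ℕ) + 1 < N := by have := j.isLt; omega
    have hs2 := (hs.2.2 ((j:ℕ)+1) (by omega) hjN).2
    have h1 : (0:ℝ) < ((j:ℕ):ℝ) + 1 := by positivity
    push_cast
    exact mul_pos (div_pos h1 hNR) (by linarith)
  have hsubA : ∀ i j : Fin (N - 1), (i:ℕ) = (j:ℕ)+1 → 0 < A i j := by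
    intro i j h
    simp only [hA, moranCore, moranM, Fin.val_mk]
    rw [if_neg (by omega), if_pos (by omega)]
    have hjN : (j:ℕ) + 1 < N := by have := j.isLt; omega
    have hs1 := (hs.2.2 ((j:ℕ)+1) (by omega) hjN).1
    have h1 : (0:ℝ) < (N:ℝ) - (((j:ℕ):ℝ) + 1) := by
      have : ((j:ℕ):ℝ) + 1 < (N:ℝ) := by exact_mod_cast hjN
      linarith
    push_cast
    exact mul_pos (div_pos h1 hNR) hs1
  -- the symmetrizing weights
  set cfun : ℕ → ℝ := fun k =>
    if h : k + 1 < N - 1 then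
      Real.sqrt (A ⟨k+1, h⟩ ⟨k, by omega⟩ / A ⟨k, by omega⟩ ⟨k+1, h⟩) else 1 with hcfun
  have hcpos : ∀ k, 0 < cfun k := by
    intro k
    simp only [hcfun]
    split
    · rename_i h
      exact Real.sqrt_pos.mpr (div_pos (hsubA ⟨k+1, h⟩ ⟨k, by omega⟩ rfl)
        (hsupA ⟨k, by omega⟩ ⟨k+1, h⟩ rfl))
    · exact one_pos
  set dfun : ℕ → ℝ := fun m => ∏ k ∈ Finset.range m, cfun k with hdfun
  have hdpos : ∀ m, 0 < dfun m := by
    intro m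
    exact Finset.prod_pos fun k _ => hcpos k
  -- the key symmetry identity
  have hadj : ∀ i j : Fin (N - 1), (i:ℕ)+1 = (j:ℕ) →
      A i j * dfun j * dfun j = A j i * dfun i * dfun i := by
    intro i j h
    have hlt : (i:ℕ) + 1 < N - 1 := by rw [h]; exact j.isLt
    have hji : (⟨(i:ℕ)+1, hlt⟩ : Fin (N-1)) = j := Fin.ext h
    have hii : (⟨(i:ℕ), by omega⟩ : Fin (N-1)) = i := Fin.ext rfl
    have hcval : cfun (i:ℕ) = Real.sqrt (A j i / A i j) := by
      simp only [hcfun]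
      rw [dif_pos hlt, hji, hii]
    have hd : dfun (j:ℕ) = dfun (i:ℕ) * cfun (i:ℕ) := by
      rw [← h]
      simp only [hdfun]
      exact Finset.prod_range_succ _ _
    have hApos : 0 < A i j := hsupA i j h
    have hApos' : 0 < A j i := hsubA j i (by omega)
    have hsq : cfun (i:ℕ) * cfun (i:ℕ) = A j i / A i j := by
      rw [hcval]
      exact Real.mul_self_sqrt (le_of_lt (div_pos hApos' hApos))
    rw [hd]
    have : A i j * (dfun i * cfun i) * (dfun i * cfun i)
        = A i j * (cfun i * cfun i) * (dfun i * dfun i) := by ring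
    rw [this, hsq]
    field_simp
  have hkey : ∀ i j : Fin (N - 1), A i j * dfun j * dfun j = A j i * dfun i * dfun i := by
    intro i j
    by_cases h1 : (i:ℕ) = (j:ℕ)
    · have : i = j := Fin.ext h1
      rw [this]
    by_cases h2 : (i:ℕ)+1 = (j:ℕ)
    · exact hadj i j h2
    by_cases h3 : (j:ℕ)+1 = (i:ℕ)
    · exact (hadj j i h3).symm
    · have hfar : (i:ℕ)+1 < (j:ℕ) ∨ (j:ℕ)+1 < (i:ℕ) := by omega
      rw [htri i j hfar, htri j i (by omega)]
      ring
  -- the symmetrized matrix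
  set S : Matrix (Fin (N - 1)) (Fin (N - 1)) ℝ :=
    fun i j => A i j * dfun j / dfun i with hSdef
  have hsymm : ∀ i j, S j i = S i j := by
    intro i j
    simp only [hSdef]
    rw [div_eq_div_iff (ne_of_gt (hdpos j)) (ne_of_gt (hdpos i))]
    have := hkey i j
    linarith [hkey j i]
  have hHerm : S.IsHermitian := by
    show Sᴴ = S
    ext i j
    simp only [Matrix.conjTranspose_apply, RCLike.star_def, starRingEnd_apply, star_trivial]
    exact hsymm i j
  have hupperS : ∀ i j : Fin (N - 1), (i:ℕ)+1 < (j:ℕ) → S i j = 0 := by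
    intro i j h
    simp only [hSdef]
    rw [htri i j (Or.inl h)]
    ring
  have hsupS : ∀ i j : Fin (N - 1), (i:ℕ)+1 = (j:ℕ) → S i j ≠ 0 := by
    intro i j h
    have : 0 < S i j := div_pos (mul_pos (hsupA i j h) (hdpos j)) (hdpos i)
    exact ne_of_gt this
  -- eigenvalues and eigenvectors of S
  set lam := hHerm.eigenvalues with hlam
  have hinj : Function.Injective lam := jacobi_eigenvalues_injective hHerm hupperS hsupS
  set B : Fin (N - 1) → (Fin (N - 1) → ℝ) := fun i => ⇑(hHerm.eigenvectorBasis i) with hB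
  have hBe : ∀ i, S.mulVec (B i) = lam i • B i := fun i => hHerm.mulVec_eigenvectorBasis i
  have hBne : ∀ i, B i ≠ 0 := by
    intro i hzero
    have h1 : hHerm.eigenvectorBasis i ≠ 0 := hHerm.eigenvectorBasis.orthonormal.ne_zero i
    exact h1 ((WithLp.ofLp_eq_zero 2).mp hzero)
  -- sorting
  set τ : Equiv.Perm (Fin (N - 1)) := Tuple.sort (fun i => -(lam i)) with hτ
  set μ : Fin (N - 1) → ℝ := fun i => lam (τ i) with hμ
  have hμinj : Function.Injective μ := fun a b h => τ.injective (hinj h)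
  have hmono : ∀ i j : Fin (N - 1), i ≤ j → μ j ≤ μ i := by
    intro i j hij
    have := Tuple.monotone_sort (fun i => -(lam i)) hij
    simp only [Function.comp_apply] at this
    simp only [hμ]
    linarith
  have hstrict : ∀ j : Fin (N - 1), (j : ℕ) ≠ 0 → μ j < μ ⟨0, by omega⟩ := by
    intro j hj
    have hle : μ j ≤ μ ⟨0, by omega⟩ := by
      apply hmono
      exact Fin.mk_le_of_le_val (Nat.zero_le _)
    rcases lt_or_eq_of_le hle with h | h
    · exact h
    · exfalso
      have := hμinj h
      apply hj
      rw [this]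
  -- eigenvectors of A
  set v : Fin (N - 1) → (Fin (N - 1) → ℝ) := fun i k => dfun k * B (τ i) k with hv
  set u : Fin (N - 1) → (Fin (N - 1) → ℝ) := fun i k => B (τ i) k / dfun k with hu
  have hAS : ∀ k j : Fin (N - 1), A k j * dfun j = dfun k * S k j := by
    intro k j
    simp only [hSdef]
    have h : dfun (k:ℕ) ≠ 0 := ne_of_gt (hdpos (k:ℕ))
    field_simp
  have hv_eig : ∀ i, A.mulVec (v i) = μ i • v i := by
    intro i
    funext k
    have hrow := congrFun (hBe (τ i)) k
    simp only [Matrix.mulVec, dotProduct, Pi.smul_apply, smul_eq_mul] at hrow ⊢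
    have hterm : ∀ j, A k j * v i j = dfun k * (S k j * B (τ i) j) := by
      intro j
      simp only [hv]
      have := hAS k j
      calc A k j * (dfun j * B (τ i) j) = (A k j * dfun j) * B (τ i) j := by ring
        _ = (dfun k * S k j) * B (τ i) j := by rw [this]
        _ = dfun k * (S k j * B (τ i) j) := by ring
    calc ∑ j, A k j * v i j = ∑ j, dfun k * (S k j * B (τ i) j) :=
          Finset.sum_congr rfl (fun j _ => hterm j)
      _ = dfun k * ∑ j, S k j * B (τ i) j := by rw [Finset.mul_sum]
      _ = dfun k * (lam (τ i) * B (τ i) k) := by rw [hrow]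
      _ = μ i * v i k := by simp only [hμ, hv]; ring
  have hu_eig : ∀ i, A.vecMul (u i) = μ i • u i := by
    intro i
    funext j
    have hrow := congrFun (hBe (τ i)) j
    simp only [Matrix.mulVec, dotProduct, Pi.smul_apply, smul_eq_mul] at hrow
    simp only [Matrix.vecMul, dotProduct, Pi.smul_apply, smul_eq_mul]
    have hterm : ∀ k, u i k * A k j = (S j k * B (τ i) k) / dfun j := by
      intro k
      simp only [hu]
      rw [← hsymm j k]
      simp only [hSdef]
      have h1 : dfun k ≠ 0 := ne_of_gt (hdpos k)
      have h2 : dfun j ≠ 0 := ne_of_gt (hdpos j)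
      field_simp
    calc ∑ k, u i k * A k j = ∑ k, (S j k * B (τ i) k) / dfun j :=
          Finset.sum_congr rfl (fun k _ => hterm k)
      _ = (∑ k, S j k * B (τ i) k) / dfun j := by rw [Finset.sum_div]
      _ = (lam (τ i) * B (τ i) j) / dfun j := by rw [hrow]
      _ = μ i * u i j := by simp only [hμ, hu]; ring
  -- nonvanishing
  have hv_ne : ∀ i, v i ≠ 0 := by
    intro i hzero
    apply hBne (τ i)
    funext k
    have := congrFun hzero k
    simp only [hv, Pi.zero_apply] at this
    have hd := ne_of_gt (hdpos (k:ℕ))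
    have : B (τ i) k = 0 := by
      rcases mul_eq_zero.mp this with h | h
      · exact absurd h hd
      · exact h
    simpa using this
  have hu_ne : ∀ i, u i ≠ 0 := by
    intro i hzero
    apply hBne (τ i)
    funext k
    have := congrFun hzero k
    simp only [hu, Pi.zero_apply] at this
    have hd := ne_of_gt (hdpos (k:ℕ))
    have : B (τ i) k = 0 := by
      rcases div_eq_zero_iff.mp this with h | h
      · exact h
      · exact absurd h hd
    simpa using this
  -- linear independence and spanning
  have hne : Nonempty (Fin (N - 1)) := ⟨⟨0, by omega⟩⟩
  have hcard : Fintype.card (Fin (N - 1)) = Module.finrank ℝ (Fin (N - 1) → ℝ) := by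
    simp
  have hli_v : LinearIndependent ℝ v := by
    apply Module.End.eigenvectors_linearIndependent' (Matrix.mulVecLin A) μ hμinj v
    intro i
    constructor
    · rw [Module.End.mem_eigenspace_iff, Matrix.mulVecLin_apply]
      exact hv_eig i
    · exact hv_ne i
  have hsp_v : Submodule.span ℝ (Set.range v) = ⊤ :=
    hli_v.span_eq_top_of_card_eq_finrank hcard
  have hu_eig' : ∀ i, Aᵀ.mulVec (u i) = μ i • u i := by
    intro i
    rw [Matrix.mulVec_transpose]
    exact hu_eig i
  have hli_u : LinearIndependent ℝ u := by
    apply Module.End.eigenvectors_linearIndependent' (Matrix.mulVecLin Aᵀ) μ hμinj u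
    intro i
    constructor
    · rw [Module.End.mem_eigenspace_iff, Matrix.mulVecLin_apply]
      exact hu_eig' i
    · exact hu_ne i
  have hsp_u : Submodule.span ℝ (Set.range u) = ⊤ :=
    hli_u.span_eq_top_of_card_eq_finrank hcard
  exact ⟨μ, v, u, hmono, hstrict, hli_v, hsp_v, hli_u, hsp_u, hv_eig, hu_eig⟩
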